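/- Let ≤_T be the graded order with X₂ > X₁. Let e ∈ 𝔽(r₁,r₂) and τ ∈ 𝓘, let U be the syndrome table afforded by τ and e, and suppose ω(e) ≤ t ≤ 4, t ≥ 1, t ≤ ⌊r₁/2⌋, t ≤ ⌊r₂/2⌋, and u_{(i,j)} ≠ 0 for some (i,j) with i + j = t. Let F = {f^(1),…,f^(d)} ⊆ L[X₁,X₂] be a minimal set of polynomials for the subarray of U indexed by B(2t+1): the defining points s^(i) = LP(f^(i)) satisfy s^(1)_1 > … > s^(d)_1 = 0 and 0 = s^(1)_2 < … < s^(d)_2; each f^(i) satisfies f^(i)[U]_k = 0 for every k ∈ B(2t+1) with s^(i) ⪯ k; and every nonzero g ∈ L[X₁,X₂] with LP(g) ∈ ∪_{i=1}^{d−1}{n : n ⪯ (s^(i)_1 − 1, s^(i+1)_2 − 1)} satisfies g[U]_k ≠ 0 for some k ∈ B(2t+1) with LP(g) ⪯ k. Then F is a Gröbner basis of the ideal Λ(U) with respect to ≤_T. -/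

import Mathlib

/-- A monomial order on ℕ × ℕ: a linear order compatible with addition
for which (0,0) is the least element. -/
structure MonOrd where
  le : ℕ × ℕ → ℕ × ℕ → Prop
  refl : ∀ a, le a a
  trans : ∀ a b c, le a b → le b c → le a c
  antisymm : ∀ a b, le a b → le b a → a = b
  total : ∀ a b, le a b ∨ le b a
  add_right : ∀ a b c, le a b → le (a + c) (b + c)
  zero_le : ∀ a, le (0, 0) a

/-- Strict version of a monomial order. -/
def MonOrd.lt (T : MonOrd) (a b : ℕ × ℕ) : Prop := T.le a b ∧ a ≠ b

/-- `s` is the leading power product exponent of `f` w.r.t. `T`. -/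
def IsLP {L : Type} [Field L] (T : MonOrd) (f : (ℕ × ℕ) →₀ L) (s : ℕ × ℕ) : Prop :=
  s ∈ f.support ∧ ∀ m ∈ f.support, T.le m s

/-- `f[U]_n`, computed with respect to a given leading exponent `s` of `f`. -/
noncomputable def fApp {L : Type} [Field L] (U : ℕ × ℕ → L) (f : (ℕ × ℕ) →₀ L)
    (s n : ℕ × ℕ) : L :=
  if s.1 ≤ n.1 ∧ s.2 ≤ n.2 then
    ∑ m ∈ f.support, f m * U (m.1 + n.1 - s.1, m.2 + n.2 - s.2)
  else 0

/-- `f` generates the doubly periodic array `U`. -/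
def GeneratesU {L : Type} [Field L] (T : MonOrd) (U : ℕ × ℕ → L) (f : (ℕ × ℕ) →₀ L) : Prop :=
  ∃ s, IsLP T f s ∧ ∀ n, fApp U f s n = 0

/-- `f` generates the finite subarray `u^l` of `U`. -/
def GeneratesUpTo {L : Type} [Field L] (T : MonOrd) (U : ℕ × ℕ → L) (l : ℕ × ℕ)
    (f : (ℕ × ℕ) →₀ L) : Prop :=
  ∃ s, IsLP T f s ∧ ∀ k, s.1 ≤ k.1 → s.2 ≤ k.2 → T.lt k l → fApp U f s k = 0

/-- `U` is a doubly periodic array of period r₁ × r₂. -/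
def DoublyPeriodic {L : Type} (r₁ r₂ : ℕ) (U : ℕ × ℕ → L) : Prop :=
  ∀ n m : ℕ × ℕ, n.1 % r₁ = m.1 % r₁ → n.2 % r₂ = m.2 % r₂ → U n = U m

/-- Evaluation of a bivariate polynomial at a point `(x, y)`. -/
noncomputable def polyEval {L : Type} [Field L] (f : (ℕ × ℕ) →₀ L) (x y : L) : L :=
  ∑ m ∈ f.support, f m * x ^ m.1 * y ^ m.2

/-- The syndrome table afforded by `τ` and `e`:  `u_n = e(α^(τ+n))`. -/
noncomputable def synTable {F L : Type} [Field F] [Field L] [Algebra F L] {r₁ r₂ : ℕ}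
    (α₁ α₂ : L) (τ : Fin r₁ × Fin r₂) (e : Fin r₁ × Fin r₂ → F) : ℕ × ℕ → L :=
  fun n => ∑ p : Fin r₁ × Fin r₂,
    algebraMap F L (e p) * (α₁ ^ ((τ.1 : ℕ) + n.1)) ^ (p.1 : ℕ)
      * (α₂ ^ ((τ.2 : ℕ) + n.2)) ^ (p.2 : ℕ)

/-- The weight ω(e): number of nonzero coefficients. -/
noncomputable def wt {F : Type} [Field F] {r₁ r₂ : ℕ} (e : Fin r₁ × Fin r₂ → F) : ℕ :=
  {p | e p ≠ 0}.ncard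

/-- The hyperbolic set B(δ) of amplitude δ inside {0,…,r₁−1} × {0,…,r₂−1}. -/
def hypB (r₁ r₂ δ : ℕ) : Set (ℕ × ℕ) :=
  {l | l.1 < r₁ ∧ l.2 < r₂ ∧ (l.1 + 1) * (l.2 + 1) ≤ δ ∧ l ≠ (δ - 1, 0) ∧ l ≠ (0, δ - 1)}

/-- The border set 𝔉 = {l ∈ B(2t+1) : 2t ≤ (l₁+1)(l₂+1)}. -/
def frontF (r₁ r₂ t : ℕ) : Set (ℕ × ℕ) :=
  {l ∈ hypB r₁ r₂ (2 * t + 1) | 2 * t ≤ (l.1 + 1) * (l.2 + 1)}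

/-- The lexicographic order with X₁ > X₂. -/
def lexMonOrd : MonOrd where
  le a b := a.1 < b.1 ∨ (a.1 = b.1 ∧ a.2 ≤ b.2)
  refl a := by omega
  trans a b c h1 h2 := by omega
  antisymm a b h1 h2 := by
    obtain ⟨a1, a2⟩ := a; obtain ⟨b1, b2⟩ := b
    simp_all only [Prod.mk.injEq]; omega
  total a b := by omega
  add_right a b c h := by
    obtain ⟨a1, a2⟩ := a; obtain ⟨b1, b2⟩ := b; obtain ⟨c1, c2⟩ := c
    simp_all only [Prod.mk_add_mk]; omega
  zero_le a := by
    obtain ⟨a1, a2⟩ := a; simp only []; omega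

/-- The (reverse) graded order with X₂ > X₁. -/
def grMonOrd : MonOrd where
  le a b := a.1 + a.2 < b.1 + b.2 ∨ (a.1 + a.2 = b.1 + b.2 ∧ a.2 ≤ b.2)
  refl a := by omega
  trans a b c h1 h2 := by omega
  antisymm a b h1 h2 := by
    obtain ⟨a1, a2⟩ := a; obtain ⟨b1, b2⟩ := b
    simp_all only [Prod.mk.injEq]; omega
  total a b := by omega
  add_right a b c h := by
    obtain ⟨a1, a2⟩ := a; obtain ⟨b1, b2⟩ := b; obtain ⟨c1, c2⟩ := c
    simp_all only [Prod.mk_add_mk]; omega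
  zero_le a := by
    obtain ⟨a1, a2⟩ := a; simp only []; omega

/-- The ideal (X₁^{r₁} − 1, X₂^{r₂} − 1) of L[X₁,X₂]. -/
noncomputable def periodIdeal (L : Type) [Field L] (r₁ r₂ : ℕ) :
    Ideal (AddMonoidAlgebra L (ℕ × ℕ)) :=
  Ideal.span {AddMonoidAlgebra.single (r₁, 0) 1 - 1, AddMonoidAlgebra.single (0, r₂) 1 - 1}


/-! ### Auxiliary machinery -/

def muGr (a : ℕ × ℕ) : ℕ := (a.1 + a.2) * (a.1 + a.2) + (a.1 + a.2) + a.2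

lemma gr_le_iff (a b : ℕ × ℕ) : grMonOrd.le a b ↔ muGr a ≤ muGr b := by
  obtain ⟨a1, a2⟩ := a; obtain ⟨b1, b2⟩ := b
  show (a1 + a2 < b1 + b2 ∨ (a1 + a2 = b1 + b2 ∧ a2 ≤ b2)) ↔ _
  unfold muGr
  constructor
  · rintro (h | ⟨h1, h2⟩)
    · nlinarith
    · simp only at h1 ⊢; rw [h1]; omega
  · intro h
    by_contra hc
    push_neg at hc
    obtain ⟨h1, h2⟩ := hc
    rcases Nat.lt_or_ge (b1 + b2) (a1 + a2) with hl | hl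
    · nlinarith
    · have : a1 + a2 = b1 + b2 := by omega
      simp only at this h ⊢
      rw [this] at h
      have h3 := h2 this
      omega

lemma gr_lt_mu {a b : ℕ × ℕ} (h : grMonOrd.le a b) (hne : a ≠ b) : muGr a < muGr b := by
  have h1 := (gr_le_iff a b).1 h
  rcases Nat.lt_or_ge (muGr a) (muGr b) with h2 | h2
  · exact h2
  · exact absurd (grMonOrd.antisymm a b h ((gr_le_iff b a).2 h2)) hne

lemma exists_isLP {L : Type} [Field L] (f : (ℕ × ℕ) →₀ L) (hf : f ≠ 0) :
    ∃ s, IsLP grMonOrd f s := by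
  obtain ⟨s, hs, hmax⟩ := Finset.exists_max_image f.support muGr
    (Finsupp.support_nonempty_iff.2 hf)
  exact ⟨s, hs, fun m hm => (gr_le_iff m s).2 (hmax m hm)⟩

lemma isLP_unique {L : Type} [Field L] {T : MonOrd} {f : (ℕ × ℕ) →₀ L} {s s' : ℕ × ℕ}
    (h : IsLP T f s) (h' : IsLP T f s') : s = s' :=
  T.antisymm s s' (h'.2 s h.1) (h.2 s' h'.1)

noncomputable def evalChi {L : Type} [Field L] (x y : L) : Multiplicative (ℕ × ℕ) →* L where
  toFun m := x ^ (Multiplicative.toAdd m).1 * y ^ (Multiplicative.toAdd m).2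
  map_one' := by simp
  map_mul' a b := by
    show x ^ ((Multiplicative.toAdd a).1 + (Multiplicative.toAdd b).1) *
      y ^ ((Multiplicative.toAdd a).2 + (Multiplicative.toAdd b).2) = _
    rw [pow_add, pow_add]; ring

noncomputable def evalAH {L : Type} [Field L] (x y : L) :
    AddMonoidAlgebra L (ℕ × ℕ) →ₐ[L] L :=
  AddMonoidAlgebra.lift L L (ℕ × ℕ) (evalChi x y)

lemma polyEval_eq_evalAH {L : Type} [Field L] (f : (ℕ × ℕ) →₀ L) (x y : L) :
    polyEval f x y = evalAH x y (AddMonoidAlgebra.ofCoeff f) := by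
  rw [evalAH, AddMonoidAlgebra.lift_apply]
  simp only [polyEval, Finsupp.sum, evalChi, MonoidHom.coe_mk, OneHom.coe_mk, smul_eq_mul,
    AddMonoidAlgebra.coeff_ofCoeff]
  exact Finset.sum_congr rfl fun m _ => by rw [mul_assoc]; rfl

lemma evalAH_single {L : Type} [Field L] (x y : L) (a : ℕ × ℕ) (b : L) :
    evalAH x y (AddMonoidAlgebra.single a b) = b * x ^ a.1 * y ^ a.2 := by
  rw [evalAH, AddMonoidAlgebra.lift_single]
  show b • (x ^ a.1 * y ^ a.2) = _
  rw [smul_eq_mul, mul_assoc]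

lemma polyEval_mapDomain {L : Type} [Field L] (f : (ℕ × ℕ) →₀ L) (d : ℕ × ℕ) (x y : L) :
    polyEval (Finsupp.mapDomain (· + d) f) x y = x ^ d.1 * y ^ d.2 * polyEval f x y := by
  show (Finsupp.mapDomain (· + d) f).sum (fun m c => c * x ^ m.1 * y ^ m.2)
      = x ^ d.1 * y ^ d.2 * f.sum (fun m c => c * x ^ m.1 * y ^ m.2)
  rw [Finsupp.sum_mapDomain_index (by simp) (fun b m1 m2 => by ring), Finsupp.sum,
    Finsupp.sum, Finset.mul_sum]
  exact Finset.sum_congr rfl fun m _ => by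
    show f m * x ^ (m.1 + d.1) * y ^ (m.2 + d.2) = _
    rw [pow_add, pow_add]; ring

set_option maxHeartbeats 4000000 in
lemma claim_core : ∀ t a b n1 n2 : ℕ, t < 5 → a < 5 → b < 5 → n1 < 4 → n2 < 4 →
    (1 ≤ t →
    (n1+1)*(n2+1) ≤ t →
    (a = 0 ∨ (n1+1)*(n2+1) + a*(b+1) ≤ t + min (n1+1) a * min (n2+1) (b+1)) →
    (b = 0 ∨ (n1+1)*(n2+1) + (a+1)*b ≤ t + min (n1+1) (a+1) * min (n2+1) b) →
    (a+n1+1)*(b+n2+1) ≤ 2*t+1 ∧ a+n1 ≤ 2*t-1 ∧ b+n2 ≤ 2*t-1) := by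
  intro t a b n1 n2 ht ha hb hn1 hn2
  interval_cases t <;> interval_cases a <;> interval_cases b <;>
    interval_cases n1 <;> interval_cases n2 <;> decide

lemma claim_arith (t a b n1 n2 : ℕ) (ht1 : 1 ≤ t) (ht4 : t ≤ 4)
    (h1 : (n1+1)*(n2+1) ≤ t)
    (h4 : a ≠ 0 → (n1+1)*(n2+1) + a*(b+1) ≤ t + min (n1+1) a * min (n2+1) (b+1))
    (h5 : b ≠ 0 → (n1+1)*(n2+1) + (a+1)*b ≤ t + min (n1+1) (a+1) * min (n2+1) b) :
    (a+n1+1)*(b+n2+1) ≤ 2*t+1 ∧ a+n1 ≤ 2*t-1 ∧ b+n2 ≤ 2*t-1 := by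
  have hn1 : n1 < 4 := by nlinarith
  have hn2 : n2 < 4 := by nlinarith
  have ha : a < 5 := by
    rcases Nat.eq_zero_or_pos a with h | h
    · omega
    · have h4' := h4 (by omega)
      have hm : min (n1+1) a * min (n2+1) (b+1) ≤ (n1+1)*(n2+1) :=
        Nat.mul_le_mul (min_le_left _ _) (min_le_left _ _)
      have hab : a*(b+1) ≤ t := by linarith
      have : a ≤ a*(b+1) := Nat.le_mul_of_pos_right a (by omega)
      omega
  have hb : b < 5 := by
    rcases Nat.eq_zero_or_pos b with h | h
    · omega
    · have h5' := h5 (by omega)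
      have hm : min (n1+1) (a+1) * min (n2+1) b ≤ (n1+1)*(n2+1) :=
        Nat.mul_le_mul (min_le_left _ _) (min_le_left _ _)
      have hab : (a+1)*b ≤ t := by linarith
      have : b ≤ (a+1)*b := Nat.le_mul_of_pos_left b (by omega)
      omega
  exact claim_core t a b n1 n2 (by omega) ha hb hn1 hn2 ht1 h1
    (by rcases Nat.eq_zero_or_pos a with h|h
        · left; omega
        · right; exact h4 (by omega))
    (by rcases Nat.eq_zero_or_pos b with h|h
        · left; omega
        · right; exact h5 (by omega))

section Syn
variable {F L : Type} [Field F] [Field L] [Algebra F L] {r₁ r₂ : ℕ}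
  (α₁ α₂ : L) (τ : Fin r₁ × Fin r₂) (e : Fin r₁ × Fin r₂ → F)

noncomputable def cf (p : Fin r₁ × Fin r₂) : L :=
  algebraMap F L (e p) * (α₁ ^ (p.1 : ℕ)) ^ (τ.1 : ℕ) * (α₂ ^ (p.2 : ℕ)) ^ (τ.2 : ℕ)

lemma synTable_eq (n : ℕ × ℕ) :
    synTable α₁ α₂ τ e n = ∑ p : Fin r₁ × Fin r₂,
      cf α₁ α₂ τ e p * (α₁ ^ (p.1 : ℕ)) ^ n.1 * (α₂ ^ (p.2 : ℕ)) ^ n.2 := by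
  unfold synTable cf
  refine Finset.sum_congr rfl fun p _ => ?_
  simp only [← pow_mul]
  ring

lemma fApp_synTable (f : (ℕ × ℕ) →₀ L) (s k : ℕ × ℕ) (h1 : s.1 ≤ k.1) (h2 : s.2 ≤ k.2) :
    fApp (synTable α₁ α₂ τ e) f s k = ∑ p : Fin r₁ × Fin r₂,
      cf α₁ α₂ τ e p * (α₁ ^ (p.1 : ℕ)) ^ (k.1 - s.1) * (α₂ ^ (p.2 : ℕ)) ^ (k.2 - s.2)
        * polyEval f (α₁ ^ (p.1 : ℕ)) (α₂ ^ (p.2 : ℕ)) := by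
  unfold fApp
  rw [if_pos ⟨h1, h2⟩]
  have : ∀ m ∈ f.support, f m * synTable α₁ α₂ τ e (m.1 + k.1 - s.1, m.2 + k.2 - s.2)
      = ∑ p : Fin r₁ × Fin r₂, f m * (cf α₁ α₂ τ e p
        * (α₁ ^ (p.1 : ℕ)) ^ (m.1 + (k.1 - s.1)) * (α₂ ^ (p.2 : ℕ)) ^ (m.2 + (k.2 - s.2))) := by
    intro m _
    have hp : ((m.1 + k.1 - s.1, m.2 + k.2 - s.2) : ℕ × ℕ)
        = (m.1 + (k.1 - s.1), m.2 + (k.2 - s.2)) := by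
      rw [Prod.mk.injEq]; omega
    rw [hp, synTable_eq, Finset.mul_sum]
    try (refine Finset.sum_congr rfl fun p _ => ?_; dsimp only; ring)
  rw [Finset.sum_congr rfl this, Finset.sum_comm]
  refine Finset.sum_congr rfl fun p _ => ?_
  rw [polyEval, Finset.mul_sum]
  refine Finset.sum_congr rfl fun m _ => ?_
  rw [pow_add, pow_add]
  ring

lemma genB (f : (ℕ × ℕ) →₀ L)
    (h : ∀ p : Fin r₁ × Fin r₂, e p ≠ 0 → polyEval f (α₁ ^ (p.1 : ℕ)) (α₂ ^ (p.2 : ℕ)) = 0) :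
    ∀ s n, fApp (synTable α₁ α₂ τ e) f s n = 0 := by
  intro s n
  by_cases hc : s.1 ≤ n.1 ∧ s.2 ≤ n.2
  · rw [fApp_synTable α₁ α₂ τ e f s n hc.1 hc.2]
    refine Finset.sum_eq_zero fun p _ => ?_
    by_cases hep : e p = 0
    · unfold cf; rw [hep, map_zero]; ring
    · rw [h p hep]; ring
  · unfold fApp; rw [if_neg hc]

end Syn

open Classical in
lemma exists_indicator {L : Type} [Field L] {r₁ r₂ : ℕ}
    (α₁ α₂ : L)
    (hα₁ : IsPrimitiveRoot α₁ r₁) (hα₂ : IsPrimitiveRoot α₂ r₂)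
    (p : Fin r₁ × Fin r₂) :
    ∃ f : (ℕ × ℕ) →₀ L,
      polyEval f (α₁ ^ (p.1 : ℕ)) (α₂ ^ (p.2 : ℕ)) = 1 ∧
      ∀ q : Fin r₁ × Fin r₂, q ≠ p → polyEval f (α₁ ^ (q.1 : ℕ)) (α₂ ^ (q.2 : ℕ)) = 0 := by
  set x : Fin r₁ × Fin r₂ → L := fun q => α₁ ^ (q.1 : ℕ) with hx
  set y : Fin r₁ × Fin r₂ → L := fun q => α₂ ^ (q.2 : ℕ) with hy
  set fac : Fin r₁ × Fin r₂ → AddMonoidAlgebra L (ℕ × ℕ) := fun q =>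
    if x q = x p then AddMonoidAlgebra.single (0, 1) 1 - AddMonoidAlgebra.single (0, 0) (y q)
    else AddMonoidAlgebra.single (1, 0) 1 - AddMonoidAlgebra.single (0, 0) (x q) with hfac
  have evalfac : ∀ q q' : Fin r₁ × Fin r₂,
      evalAH (x q') (y q') (fac q) = (if x q = x p then y q' - y q else x q' - x q) := by
    intro q q'
    rw [hfac]
    by_cases h : x q = x p <;>
      simp [h, map_sub, evalAH_single]
  set fp : AddMonoidAlgebra L (ℕ × ℕ) := ∏ q ∈ Finset.univ.erase p, fac q with hfp
  have evalfp : ∀ q' : Fin r₁ × Fin r₂,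
      evalAH (x q') (y q') fp
        = ∏ q ∈ Finset.univ.erase p, (if x q = x p then y q' - y q else x q' - x q) := by
    intro q'
    rw [hfp, map_prod]
    exact Finset.prod_congr rfl fun q _ => evalfac q q'
  have hnz : evalAH (x p) (y p) fp ≠ 0 := by
    rw [evalfp]
    rw [Finset.prod_ne_zero_iff]
    intro q hq
    rw [Finset.mem_erase] at hq
    by_cases h : x q = x p
    · rw [if_pos h]
      have h1 : (q.1 : ℕ) = (p.1 : ℕ) := hα₁.pow_inj q.1.isLt p.1.isLt h
      have h2 : q.2 ≠ p.2 := by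
        intro hc
        exact hq.1 (Prod.ext (Fin.val_injective h1) hc)
      have : y q ≠ y p := fun hc => h2 (Fin.val_injective (hα₂.pow_inj q.2.isLt p.2.isLt hc))
      exact sub_ne_zero_of_ne (Ne.symm this)
    · rw [if_neg h]
      exact sub_ne_zero_of_ne (fun hc => h hc.symm)
  refine ⟨((evalAH (x p) (y p) fp)⁻¹ • fp).coeff, ?_, ?_⟩
  · rw [polyEval_eq_evalAH, AddMonoidAlgebra.ofCoeff_coeff, map_smul, smul_eq_mul, inv_mul_cancel₀ hnz]
  · intro q hq
    rw [polyEval_eq_evalAH, AddMonoidAlgebra.ofCoeff_coeff, map_smul, smul_eq_mul]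
    have : evalAH (x q) (y q) fp = 0 := by
      rw [evalfp]
      refine Finset.prod_eq_zero (Finset.mem_erase.2 ⟨hq, Finset.mem_univ q⟩) ?_
      by_cases h : x q = x p
      · rw [if_pos h]; ring
      · rw [if_neg h]; ring
    rw [this, mul_zero]


section Delta
variable {F L : Type} [Field F] [Field L] [Algebra F L] {r₁ r₂ : ℕ}
  (α₁ α₂ : L) (e : Fin r₁ × Fin r₂ → F)

/-- membership in the "error locator" ideal -/
def IsetP (f : (ℕ × ℕ) →₀ L) : Prop :=
  ∀ p : Fin r₁ × Fin r₂, e p ≠ 0 → polyEval f (α₁ ^ (p.1 : ℕ)) (α₂ ^ (p.2 : ℕ)) = 0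

/-- the footprint (delta set) of the ideal -/
def deltaSet : Set (ℕ × ℕ) :=
  {n | ¬ ∃ g : (ℕ × ℕ) →₀ L, IsLP grMonOrd g n ∧ IsetP α₁ α₂ e g}

lemma IsetP_zero : IsetP α₁ α₂ e (0 : (ℕ × ℕ) →₀ L) := by
  intro p _
  rw [polyEval_eq_evalAH]
  exact map_zero (evalAH _ _)

lemma IsetP_add {f g : (ℕ × ℕ) →₀ L} (hf : IsetP α₁ α₂ e f) (hg : IsetP α₁ α₂ e g) :
    IsetP α₁ α₂ e (f + g) := by
  intro p hp
  rw [polyEval_eq_evalAH]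
  show evalAH _ _ (AddMonoidAlgebra.ofCoeff f + AddMonoidAlgebra.ofCoeff g) = 0
  rw [map_add]
  have hf' := hf p hp
  have hg' := hg p hp
  rw [polyEval_eq_evalAH] at hf' hg'
  rw [hf', hg', add_zero]

lemma IsetP_smul {f : (ℕ × ℕ) →₀ L} (c : L) (hf : IsetP α₁ α₂ e f) :
    IsetP α₁ α₂ e (c • f) := by
  intro p hp
  rw [polyEval_eq_evalAH]
  show evalAH _ _ (c • AddMonoidAlgebra.ofCoeff f) = 0
  rw [map_smul, smul_eq_mul]
  have hf' := hf p hp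
  rw [polyEval_eq_evalAH] at hf'
  rw [hf', mul_zero]

lemma deltaSet_lower {m n : ℕ × ℕ} (h1 : m.1 ≤ n.1) (h2 : m.2 ≤ n.2)
    (hn : n ∈ deltaSet α₁ α₂ e) : m ∈ deltaSet α₁ α₂ e := by
  by_contra hm
  apply hn
  rw [deltaSet, Set.mem_setOf_eq, not_not] at hm
  obtain ⟨g, hLP, hI⟩ := hm
  set d : ℕ × ℕ := (n.1 - m.1, n.2 - m.2) with hd
  have hinj : Function.Injective (· + d) := add_left_injective d
  refine ⟨Finsupp.mapDomain (· + d) g, ⟨?_, ?_⟩, ?_⟩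
  · rw [Finsupp.mapDomain_support_of_injective hinj]
    have : m + d = n := by rw [Prod.mk.injEq]; constructor <;> simp [hd] <;> omega
    rw [← this]
    exact Finset.mem_image_of_mem _ hLP.1
  · intro u hu
    rw [Finsupp.mapDomain_support_of_injective hinj] at hu
    obtain ⟨v, hv, rfl⟩ := Finset.mem_image.1 hu
    have : m + d = n := by rw [Prod.mk.injEq]; constructor <;> simp [hd] <;> omega
    rw [← this]
    exact grMonOrd.add_right v m d (hLP.2 v hv)
  · intro p hp
    rw [polyEval_mapDomain, hI p hp, mul_zero]

lemma span_decomp_aux : ∀ N : ℕ, ∀ f : (ℕ × ℕ) →₀ L, (∀ m ∈ f.support, muGr m < N) →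
    ∃ h g : (ℕ × ℕ) →₀ L, f = h + g ∧ ↑h.support ⊆ deltaSet α₁ α₂ e ∧ IsetP α₁ α₂ e g := by
  intro N
  induction N with
  | zero =>
    intro f hf
    have : f = 0 := by
      rw [← Finsupp.support_eq_empty, Finset.eq_empty_iff_forall_notMem]
      intro m hm
      exact absurd (hf m hm) (by omega)
    exact ⟨0, 0, by rw [this, add_zero], by simp, IsetP_zero α₁ α₂ e⟩
  | succ N ih =>
    intro f hf
    by_cases hf0 : f = 0
    · exact ⟨0, 0, by rw [hf0, add_zero], by simp, IsetP_zero α₁ α₂ e⟩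
    obtain ⟨s, hs⟩ := exists_isLP f hf0
    have hmuS : muGr s ≤ N := by have := hf s hs.1; omega
    classical
    by_cases hsd : s ∈ deltaSet α₁ α₂ e
    · set f' := f - Finsupp.single s (f s) with hf'
      have hsupp : ∀ m ∈ f'.support, muGr m < N := by
        intro m hm
        have hms : m ≠ s := by
          intro hmeq
          rw [Finsupp.mem_support_iff, hmeq, hf', Finsupp.sub_apply,
            Finsupp.single_eq_same, sub_self] at hm
          exact hm rfl
        have hmf : m ∈ f.support := by
          rcases Finset.mem_union.1 (Finsupp.support_sub hm) with h | h
          · exact h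
          · exact absurd (Finsupp.support_single_subset h) (by simpa using hms)
        exact lt_of_lt_of_le (gr_lt_mu (hs.2 m hmf) hms) hmuS
      obtain ⟨h, g, hfg, hhs, hgI⟩ := ih f' hsupp
      refine ⟨h + Finsupp.single s (f s), g, ?_, ?_, hgI⟩
      · have h1 : f = f' + Finsupp.single s (f s) := by rw [hf', sub_add_cancel]
        conv_lhs => rw [h1, hfg]
        abel
      · intro u hu
        rcases Finset.mem_union.1 (Finsupp.support_add hu) with h1 | h1
        · exact hhs h1
        · have := Finsupp.support_single_subset h1
          rw [Finset.mem_singleton] at this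
          rw [this]; exact hsd
    · rw [deltaSet, Set.mem_setOf_eq, not_not] at hsd
      obtain ⟨g0, hg0LP, hg0I⟩ := hsd
      have hg0s : g0 s ≠ 0 := Finsupp.mem_support_iff.1 hg0LP.1
      set c := f s / g0 s with hc
      set f' := f - c • g0 with hf'
      have hsupp : ∀ m ∈ f'.support, muGr m < N := by
        intro m hm
        have hms : m ≠ s := by
          intro hmeq
          rw [Finsupp.mem_support_iff, hmeq, hf', Finsupp.sub_apply,
            Finsupp.smul_apply, smul_eq_mul, hc, div_mul_cancel₀ _ hg0s, sub_self] at hm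
          exact hm rfl
        have hle : grMonOrd.le m s := by
          rcases Finset.mem_union.1 (Finsupp.support_sub hm) with h | h
          · exact hs.2 m h
          · exact hg0LP.2 m (Finsupp.support_smul h)
        exact lt_of_lt_of_le (gr_lt_mu hle hms) hmuS
      obtain ⟨h, g, hfg, hhs, hgI⟩ := ih f' hsupp
      refine ⟨h, g + c • g0, ?_, hhs, IsetP_add α₁ α₂ e hgI (IsetP_smul α₁ α₂ e c hg0I)⟩
      have h1 : f = f' + c • g0 := by rw [hf', sub_add_cancel]
      conv_lhs => rw [h1, hfg]
      abel

lemma span_decomp (f : (ℕ × ℕ) →₀ L) :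
    ∃ h g : (ℕ × ℕ) →₀ L, f = h + g ∧ ↑h.support ⊆ deltaSet α₁ α₂ e ∧ IsetP α₁ α₂ e g :=
  span_decomp_aux α₁ α₂ e (f.support.sup muGr + 1) f
    (fun m hm => lt_of_le_of_lt (Finset.le_sup hm) (lt_add_one _))

open Classical in
lemma card_le_P (S : Finset (ℕ × ℕ)) (hS : ↑S ⊆ deltaSet α₁ α₂ e) :
    S.card ≤ (Finset.univ.filter (fun p : Fin r₁ × Fin r₂ => e p ≠ 0)).card := by
  classical
  set P := Finset.univ.filter (fun p : Fin r₁ × Fin r₂ => e p ≠ 0) with hP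
  set emb : (↥S → L) →ₗ[L] ((ℕ × ℕ) →₀ L) :=
    ∑ m : ↥S, (Finsupp.lsingle (m : ℕ × ℕ)).comp (LinearMap.proj m) with hemb
  have emb_eq : ∀ c : ↥S → L, emb c = ∑ m : ↥S, Finsupp.single (m : ℕ × ℕ) (c m) := by
    intro c
    rw [hemb, LinearMap.sum_apply]
    rfl
  have emb_apply : ∀ (c : ↥S → L) (u : ℕ × ℕ) (hu : u ∈ S), (emb c) u = c ⟨u, hu⟩ := by
    intro c u hu
    rw [emb_eq, Finsupp.finset_sum_apply]
    rw [Finset.sum_eq_single_of_mem (⟨u, hu⟩ : ↥S) (Finset.mem_univ _)]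
    · rw [Finsupp.single_eq_same]
    · intro m _ hm
      refine Finsupp.single_eq_of_ne ?_
      intro hc
      exact hm (Subtype.ext hc.symm)
  have emb_supp : ∀ c : ↥S → L, (emb c).support ⊆ S := by
    intro c
    rw [emb_eq]
    refine (Finsupp.support_finset_sum).trans ?_
    intro u hu
    obtain ⟨m, _, hm⟩ := Finset.mem_biUnion.1 hu
    have := Finsupp.support_single_subset hm
    rw [Finset.mem_singleton] at this
    rw [this]; exact m.2
  set Φ : (↥S → L) →ₗ[L] (↥P → L) :=
    LinearMap.pi (fun q : ↥P =>
      ((evalAH (α₁ ^ (((q : Fin r₁ × Fin r₂)).1 : ℕ))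
        (α₂ ^ (((q : Fin r₁ × Fin r₂)).2 : ℕ))).toLinearMap).comp
          ((AddMonoidAlgebra.coeffLinearEquiv L).symm.toLinearMap.comp emb)) with hΦ
  have hinj : Function.Injective ⇑Φ := by
    rw [← LinearMap.ker_eq_bot]
    rw [Submodule.eq_bot_iff]
    intro c hc
    rw [LinearMap.mem_ker] at hc
    have hIg : IsetP α₁ α₂ e (emb c) := by
      intro p hp
      have hpP : p ∈ P := by rw [hP, Finset.mem_filter]; exact ⟨Finset.mem_univ _, hp⟩
      have := congrFun (congrArg (fun v => (v : ↥P → L)) hc) ⟨p, hpP⟩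
      rw [polyEval_eq_evalAH]
      exact this
    have hg0 : emb c = 0 := by
      by_contra hg
      obtain ⟨s, hsLP⟩ := exists_isLP (emb c) hg
      exact (hS (emb_supp c hsLP.1)) ⟨emb c, hsLP, hIg⟩
    funext m
    have := emb_apply c m.1 m.2
    rw [hg0] at this
    simpa using this.symm
  have h1 : Module.finrank L (↥S → L) = S.card := by
    rw [Module.finrank_fintype_fun_eq_card, Fintype.card_coe]
  have h2 : Module.finrank L (↥P → L) = P.card := by
    rw [Module.finrank_fintype_fun_eq_card, Fintype.card_coe]
  have := LinearMap.finrank_le_finrank_of_injective hinj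
  rw [h1, h2] at this
  exact this

end Delta

lemma box_inter (a b c d : ℕ) :
    (Finset.range a ×ˢ Finset.range b) ∩ (Finset.range c ×ˢ Finset.range d)
      = Finset.range (min a c) ×ˢ Finset.range (min b d) := by
  ext ⟨u, v⟩
  simp only [Finset.mem_inter, Finset.mem_product, Finset.mem_range, lt_min_iff]
  omega

/-- under the graded order (X₂ > X₁), a minimal set of polynomials
for the subarray of the syndrome table indexed by B(2t+1) is a Gröbner basis of Λ(U). -/
theorem groebner_from_hyperbolic_graded
    (q : ℕ) (hq : IsPrimePow q)
    (F : Type) [Field F] [Fintype F] (hF : Fintype.card F = q)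
    (L : Type) [Field L] [Algebra F L]
    (r₁ r₂ : ℕ) (hr₁ : 0 < r₁) (hr₂ : 0 < r₂) (hco : Nat.Coprime q (r₁ * r₂))
    (α₁ α₂ : L) (hα₁ : IsPrimitiveRoot α₁ r₁) (hα₂ : IsPrimitiveRoot α₂ r₂)
    (t : ℕ) (ht1 : 1 ≤ t) (ht4 : t ≤ 4) (htr1 : t ≤ r₁ / 2) (htr2 : t ≤ r₂ / 2)
    (e : Fin r₁ × Fin r₂ → F) (hω : wt e ≤ t) (τ : Fin r₁ × Fin r₂)
    (U : ℕ × ℕ → L) (hU : U = synTable α₁ α₂ τ e)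
    (hnz : ∃ i j : ℕ, i + j = t ∧ U (i, j) ≠ 0)
    (d : ℕ) (hd : 0 < d)
    (f : Fin d → (ℕ × ℕ) →₀ L) (s : Fin d → ℕ × ℕ)
    (hLP : ∀ i, IsLP grMonOrd (f i) (s i))
    (hdec1 : ∀ i j : Fin d, i < j → (s j).1 < (s i).1)
    (hlast1 : (s ⟨d - 1, Nat.sub_lt hd Nat.one_pos⟩).1 = 0)
    (hinc2 : ∀ i j : Fin d, i < j → (s i).2 < (s j).2)
    (hfirst2 : (s ⟨0, hd⟩).2 = 0)
    (hgen : ∀ i : Fin d, ∀ k ∈ hypB r₁ r₂ (2 * t + 1),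
      (s i).1 ≤ k.1 → (s i).2 ≤ k.2 → fApp U (f i) (s i) k = 0)
    (hmin : ∀ (g : (ℕ × ℕ) →₀ L) (sg : ℕ × ℕ), IsLP grMonOrd g sg →
      (∃ i : Fin d, ∃ h : i.1 + 1 < d,
        sg.1 ≤ (s i).1 - 1 ∧ sg.2 ≤ (s ⟨i.1 + 1, h⟩).2 - 1) →
      ∃ k ∈ hypB r₁ r₂ (2 * t + 1), sg.1 ≤ k.1 ∧ sg.2 ≤ k.2 ∧ fApp U g sg k ≠ 0) :
    (∀ i : Fin d, GeneratesU grMonOrd U (f i)) ∧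
    (∀ (g : (ℕ × ℕ) →₀ L) (sg : ℕ × ℕ), IsLP grMonOrd g sg → GeneratesU grMonOrd U g →
      ∃ i : Fin d, (s i).1 ≤ sg.1 ∧ (s i).2 ≤ sg.2) := by
  classical
  subst hU
  -- the staircase lemma
  have hstair : ∀ n : ℕ × ℕ, (∀ j : Fin d, ¬((s j).1 ≤ n.1 ∧ (s j).2 ≤ n.2)) →
      ∃ i : Fin d, ∃ h : i.1 + 1 < d, n.1 ≤ (s i).1 - 1 ∧ n.2 ≤ (s ⟨i.1+1, h⟩).2 - 1 := by
    intro n hn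
    set T : Finset (Fin d) := Finset.univ.filter (fun i => (s i).1 ≤ n.1) with hT
    have hTne : T.Nonempty := ⟨⟨d-1, Nat.sub_lt hd Nat.one_pos⟩, by
      rw [hT, Finset.mem_filter]
      exact ⟨Finset.mem_univ _, by rw [hlast1]; omega⟩⟩
    set i0 := T.min' hTne with hi0
    have hi0T : i0 ∈ T := T.min'_mem hTne
    rw [hT, Finset.mem_filter] at hi0T
    have hn2 : n.2 < (s i0).2 := by
      by_contra hcon
      exact hn i0 ⟨hi0T.2, by omega⟩
    have hi0pos : 0 < i0.1 := by
      rcases Nat.eq_zero_or_pos i0.1 with h0 | h0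
      · exfalso
        have hi00 : i0 = ⟨0, hd⟩ := Fin.ext h0
        rw [hi00, hfirst2] at hn2
        omega
      · exact h0
    set i1 : Fin d := ⟨i0.1 - 1, by omega⟩ with hi1def
    have hlt : i1.1 + 1 < d := by
      show i0.1 - 1 + 1 < d
      omega
    have hsucc : (⟨i1.1 + 1, hlt⟩ : Fin d) = i0 := Fin.ext (by
      show i0.1 - 1 + 1 = i0.1
      omega)
    refine ⟨i1, hlt, ?_, ?_⟩
    · have hnotT : i1 ∉ T := by
        intro hmem
        have hle := T.min'_le _ hmem
        rw [← hi0] at hle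
        have hv : i0.1 ≤ i1.1 := hle
        have hv2 : i1.1 = i0.1 - 1 := rfl
        omega
      have hgt : ¬((s i1).1 ≤ n.1) := fun hle =>
        hnotT (Finset.mem_filter.2 ⟨Finset.mem_univ _, hle⟩)
      omega
    · rw [hsucc]
      omega
  -- the support of the error has at most t elements
  have hPcard : (Finset.univ.filter (fun p : Fin r₁ × Fin r₂ => e p ≠ 0)).card ≤ t := by
    have hwt : wt e = (Finset.univ.filter (fun p : Fin r₁ × Fin r₂ => e p ≠ 0)).card := by
      rw [wt, Set.ncard_eq_toFinset_card', Set.toFinset_setOf]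
    rw [← hwt]
    exact hω
  -- the interior of the staircase is inside the footprint
  have hDF : ∀ m : ℕ × ℕ, (∀ j : Fin d, ¬((s j).1 ≤ m.1 ∧ (s j).2 ≤ m.2)) →
      m ∈ deltaSet α₁ α₂ e := by
    intro m hm
    by_contra hmd
    rw [deltaSet, Set.mem_setOf_eq, not_not] at hmd
    obtain ⟨g, hgLP, hgI⟩ := hmd
    obtain ⟨i', hi', h1, h2⟩ := hstair m hm
    obtain ⟨k, hk, hk1, hk2, hkne⟩ := hmin g m hgLP ⟨i', hi', h1, h2⟩
    exact hkne (genB α₁ α₂ τ e g hgI m k)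
  -- any finite subset of the footprint has at most t elements
  have hcard : ∀ S : Finset (ℕ × ℕ), ↑S ⊆ deltaSet α₁ α₂ e → S.card ≤ t :=
    fun S hS => le_trans (card_le_P α₁ α₂ e S hS) hPcard
  -- box subsets of the footprint
  have hbox : ∀ u : ℕ × ℕ, u ∈ deltaSet α₁ α₂ e →
      ↑(Finset.range (u.1+1) ×ˢ Finset.range (u.2+1)) ⊆ deltaSet α₁ α₂ e := by
    intro u hu v hv
    rw [Finset.coe_product, Set.mem_prod] at hv
    obtain ⟨hv1, hv2⟩ := hv
    rw [Finset.coe_range, Set.mem_Iio] at hv1 hv2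
    exact deltaSet_lower α₁ α₂ e (by omega) (by omega) hu
  -- the key combinatorial claim
  have hclaim : ∀ n ∈ deltaSet α₁ α₂ e, ∀ i : Fin d,
      (((s i).1 + n.1, (s i).2 + n.2) : ℕ × ℕ) ∈ hypB r₁ r₂ (2*t+1) := by
    intro n hn i
    have f1 : (n.1+1)*(n.2+1) ≤ t := by
      have := hcard _ (hbox n hn)
      rwa [Finset.card_product, Finset.card_range, Finset.card_range] at this
    have f4 : (s i).1 ≠ 0 → (n.1+1)*(n.2+1) + (s i).1*((s i).2+1)
        ≤ t + min (n.1+1) ((s i).1) * min (n.2+1) ((s i).2+1) := by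
      intro ha
      have hcorner : (((s i).1 - 1, (s i).2) : ℕ × ℕ) ∈ deltaSet α₁ α₂ e := by
        refine hDF _ fun j hj => ?_
        rcases lt_trichotomy j i with hji | hji | hji
        · have h1 := hdec1 j i hji
          have h2 := hj.1
          simp only at h2
          omega
        · rw [hji] at hj
          have h2 := hj.1
          simp only at h2
          omega
        · have h1 := hinc2 i j hji
          have h2 := hj.2
          simp only at h2
          omega
      have hsub : ↑((Finset.range (n.1+1) ×ˢ Finset.range (n.2+1))
          ∪ (Finset.range ((s i).1) ×ˢ Finset.range ((s i).2+1))) ⊆ deltaSet α₁ α₂ e := by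
        rw [Finset.coe_union]
        refine Set.union_subset (hbox n hn) ?_
        have hb2 := hbox _ hcorner
        simp only at hb2
        rw [show ((s i).1 - 1) + 1 = (s i).1 by omega] at hb2
        exact hb2
      have hABcard := Finset.card_union_add_card_inter
        (Finset.range (n.1+1) ×ˢ Finset.range (n.2+1))
        (Finset.range ((s i).1) ×ˢ Finset.range ((s i).2+1))
      have hUB := hcard _ hsub
      rw [box_inter, Finset.card_product, Finset.card_product, Finset.card_product,
        Finset.card_range, Finset.card_range, Finset.card_range, Finset.card_range,
        Finset.card_range, Finset.card_range] at hABcard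
      omega
    have f5 : (s i).2 ≠ 0 → (n.1+1)*(n.2+1) + ((s i).1+1)*((s i).2)
        ≤ t + min (n.1+1) ((s i).1+1) * min (n.2+1) ((s i).2) := by
      intro hb
      have hcorner : (((s i).1, (s i).2 - 1) : ℕ × ℕ) ∈ deltaSet α₁ α₂ e := by
        refine hDF _ fun j hj => ?_
        rcases lt_trichotomy j i with hji | hji | hji
        · have h1 := hdec1 j i hji
          have h2 := hj.1
          simp only at h2
          omega
        · rw [hji] at hj
          have h2 := hj.2
          simp only at h2
          omega
        · have h1 := hinc2 i j hji
          have h2 := hj.2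
          simp only at h2
          omega
      have hsub : ↑((Finset.range (n.1+1) ×ˢ Finset.range (n.2+1))
          ∪ (Finset.range ((s i).1+1) ×ˢ Finset.range ((s i).2))) ⊆ deltaSet α₁ α₂ e := by
        rw [Finset.coe_union]
        refine Set.union_subset (hbox n hn) ?_
        have hb2 := hbox _ hcorner
        simp only at hb2
        rw [show ((s i).2 - 1) + 1 = (s i).2 by omega] at hb2
        exact hb2
      have hABcard := Finset.card_union_add_card_inter
        (Finset.range (n.1+1) ×ˢ Finset.range (n.2+1))
        (Finset.range ((s i).1+1) ×ˢ Finset.range ((s i).2))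
      have hUB := hcard _ hsub
      rw [box_inter, Finset.card_product, Finset.card_product, Finset.card_product,
        Finset.card_range, Finset.card_range, Finset.card_range, Finset.card_range,
        Finset.card_range, Finset.card_range] at hABcard
      omega
    obtain ⟨g1, g2, g3⟩ := claim_arith t ((s i).1) ((s i).2) n.1 n.2 ht1 ht4 f1 f4 f5
    refine ⟨by simp only; omega, by simp only; omega, by simp only; exact g1, ?_, ?_⟩
    · intro hc
      rw [Prod.mk.injEq] at hc
      omega
    · intro hc
      rw [Prod.mk.injEq] at hc
      omega
  constructor
  · -- each f i generates U
    intro i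
    have hvanish : ∀ p : Fin r₁ × Fin r₂, e p ≠ 0 →
        polyEval (f i) (α₁ ^ (p.1 : ℕ)) (α₂ ^ (p.2 : ℕ)) = 0 := by
      intro p hp
      obtain ⟨f0, hf0p, hf0q⟩ := exists_indicator α₁ α₂ hα₁ hα₂ p
      obtain ⟨h, g, hfg, hhsupp, hgI⟩ := span_decomp α₁ α₂ e f0
      -- evaluations of h on the error support
      have hval : ∀ q : Fin r₁ × Fin r₂, e q ≠ 0 →
          polyEval h (α₁ ^ (q.1 : ℕ)) (α₂ ^ (q.2 : ℕ)) = if q = p then 1 else 0 := by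
        intro q hq
        have h0 : polyEval f0 (α₁ ^ (q.1 : ℕ)) (α₂ ^ (q.2 : ℕ))
            = polyEval h (α₁ ^ (q.1 : ℕ)) (α₂ ^ (q.2 : ℕ))
              + polyEval g (α₁ ^ (q.1 : ℕ)) (α₂ ^ (q.2 : ℕ)) := by
          rw [polyEval_eq_evalAH, polyEval_eq_evalAH, polyEval_eq_evalAH, hfg,
              AddMonoidAlgebra.ofCoeff_add, map_add]
        rw [hgI q hq, add_zero] at h0
        by_cases hqp : q = p
        · rw [if_pos hqp, ← h0, hqp, hf0p]
        · rw [if_neg hqp, ← h0, hf0q q hqp]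
      -- the key vanishing sum
      have key : ∑ n ∈ h.support, h n * fApp (synTable α₁ α₂ τ e) (f i) (s i)
          ((s i).1 + n.1, (s i).2 + n.2) = 0 := by
        refine Finset.sum_eq_zero fun n hns => ?_
        rw [hgen i _ (hclaim n (hhsupp hns) i) (Nat.le_add_right _ _) (Nat.le_add_right _ _),
          mul_zero]
      have key2 : ∀ n ∈ h.support, h n * fApp (synTable α₁ α₂ τ e) (f i) (s i)
          ((s i).1 + n.1, (s i).2 + n.2)
          = ∑ p' : Fin r₁ × Fin r₂, cf α₁ α₂ τ e p'
              * polyEval (f i) (α₁ ^ (p'.1 : ℕ)) (α₂ ^ (p'.2 : ℕ))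
              * (h n * (α₁ ^ (p'.1 : ℕ)) ^ n.1 * (α₂ ^ (p'.2 : ℕ)) ^ n.2) := by
        intro n _
        rw [fApp_synTable α₁ α₂ τ e (f i) (s i) _ (Nat.le_add_right _ _)
          (Nat.le_add_right _ _), Finset.mul_sum]
        refine Finset.sum_congr rfl fun p' _ => ?_
        dsimp only
        rw [Nat.add_sub_cancel_left, Nat.add_sub_cancel_left]
        ring
      rw [Finset.sum_congr rfl key2, Finset.sum_comm] at key
      have key3 : ∀ p' : Fin r₁ × Fin r₂,
          (∑ n ∈ h.support, cf α₁ α₂ τ e p'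
            * polyEval (f i) (α₁ ^ (p'.1 : ℕ)) (α₂ ^ (p'.2 : ℕ))
            * (h n * (α₁ ^ (p'.1 : ℕ)) ^ n.1 * (α₂ ^ (p'.2 : ℕ)) ^ n.2))
          = cf α₁ α₂ τ e p' * polyEval (f i) (α₁ ^ (p'.1 : ℕ)) (α₂ ^ (p'.2 : ℕ))
              * polyEval h (α₁ ^ (p'.1 : ℕ)) (α₂ ^ (p'.2 : ℕ)) := by
        intro p'
        set C := cf α₁ α₂ τ e p'
          * polyEval (f i) (α₁ ^ (p'.1 : ℕ)) (α₂ ^ (p'.2 : ℕ)) with hC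
        rw [polyEval, Finset.mul_sum]
      rw [Finset.sum_congr rfl (fun p' _ => key3 p')] at key
      rw [Finset.sum_eq_single p (fun q _ hqp => ?_) (fun hnp => absurd (Finset.mem_univ p) hnp)]
        at key
      · rw [hval p hp, if_pos rfl, mul_one] at key
        have hcfp : cf α₁ α₂ τ e p ≠ 0 := by
          unfold cf
          refine mul_ne_zero (mul_ne_zero ?_ ?_) ?_
          · exact (map_ne_zero_iff _ (algebraMap F L).injective).2 hp
          · exact pow_ne_zero _ (pow_ne_zero _ (hα₁.ne_zero (by omega)))
          · exact pow_ne_zero _ (pow_ne_zero _ (hα₂.ne_zero (by omega)))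
        rcases mul_eq_zero.1 key with hk | hk
        · exact absurd hk hcfp
        · exact hk
      · by_cases heq : e q = 0
        · unfold cf
          rw [heq, map_zero]
          ring
        · rw [hval q heq, if_neg hqp, mul_zero]
    exact ⟨s i, hLP i, fun n => genB α₁ α₂ τ e (f i) hvanish (s i) n⟩
  · -- minimality of the leading exponents
    intro g sg hLPg hGen
    by_contra hcon
    have hn : ∀ j : Fin d, ¬((s j).1 ≤ sg.1 ∧ (s j).2 ≤ sg.2) := fun j hj => hcon ⟨j, hj⟩
    obtain ⟨i, hi, h1, h2⟩ := hstair sg hn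
    obtain ⟨k, hk, hk1, hk2, hkne⟩ := hmin g sg hLPg ⟨i, hi, h1, h2⟩
    obtain ⟨s', hLP', hz⟩ := hGen
    have hss : s' = sg := isLP_unique hLP' hLPg
    rw [hss] at hz
    exact hkne (hz k)
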